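/- Let x > 10 be real, let λ1, λ2 ∈ ℂ \ {0} with β := |log(λ1/λ2)| satisfying 0 < β < exp(−5·e^{x+1}), and set g_j(w) = λ_j·exp(w) for j = 1, 2. Let n ≥ 1 be an integer with n ≤ e^{3x}, and let z_0, z_1, …, z_n ∈ ℂ with g_1(z_{j+1}) = z_j for j = 0, 1, …, n−1; write z = z_n. Assume |Dg_1^j(g_1^k(z))| > exp(−e^{x+1}) for all integers j, k ≥ 0 with j + k ≤ n. Then there exists y_n ∈ ℂ such that g_2^n(y_n) = g_1^n(z), |g_2^j(y_n) − g_1^j(z_n)| < β·exp(e^{x+2}) for all 0 ≤ j ≤ n, and |log(Dg_2^n(y_n)/Dg_1^n(z_n))| < exp(−e^x). -/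

import Mathlib

open Function

set_option maxHeartbeats 1000000

/-- `Df g k w = ∏_{j=1}^k g^j(w)`, the derivative of the k-th iterate of
`g(w) = λ·exp w` at `w`. -/
noncomputable def Df (g : ℂ → ℂ) (k : ℕ) (w : ℂ) : ℂ :=
  ∏ j ∈ Finset.range k, g^[j + 1] w

lemma Df_zero (g : ℂ → ℂ) (w : ℂ) : Df g 0 w = 1 := by simp [Df]

lemma Df_succ' (g : ℂ → ℂ) (m : ℕ) (w : ℂ) : Df g (m+1) w = g w * Df g m (g w) := by
  simp only [Df, Finset.prod_range_succ']
  rw [mul_comm]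
  congr 1

lemma aux_log_bound {v : ℂ} {d : ℝ} (hd : d ≤ 1/2) (hv : ‖v‖ ≤ d) :
    ‖Complex.log (1 + v)‖ ≤ (1 + d) * ‖v‖ := by
  have h0 : 0 ≤ ‖v‖ := norm_nonneg _
  have hv2 : ‖v‖ ≤ 1/2 := by linarith
  have hv1 : ‖v‖ < 1 := by linarith
  have hb := Complex.norm_log_one_add_le hv1
  have h2 : (1 - ‖v‖)⁻¹ ≤ 2 := by
    rw [inv_le_comm₀ (by linarith) (by norm_num)]
    linarith
  nlinarith [sq_nonneg (‖v‖)]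

/-- backward orbit under `g2` shadowing the forward orbit `w` -/
noncomputable def U (c : ℂ) (w : ℕ → ℂ) (n : ℕ) : ℕ → ℂ
  | 0 => w n
  | i + 1 => w (n - (i+1)) + c + Complex.log (U c w n i / w (n - i))

lemma U_zero (c : ℂ) (w : ℕ → ℂ) (n : ℕ) : U c w n 0 = w n := rfl

lemma U_succ (c : ℂ) (w : ℕ → ℂ) (n i : ℕ) :
    U c w n (i+1) = w (n - (i+1)) + c + Complex.log (U c w n i / w (n - i)) := rfl

/-- parameter-transfer lemma along a backward orbit. -/
theorem stmt_19 (x : ℝ) (hx : 10 < x)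
    (lam1 lam2 : ℂ) (h1 : lam1 ≠ 0) (h2 : lam2 ≠ 0)
    (β : ℝ) (hβ : β = ‖Complex.log (lam1 / lam2)‖)
    (hβ0 : 0 < β) (hβx : β < Real.exp (-5 * Real.exp (x + 1)))
    (g1 g2 : ℂ → ℂ)
    (hg1 : ∀ w, g1 w = lam1 * Complex.exp w)
    (hg2 : ∀ w, g2 w = lam2 * Complex.exp w)
    (n : ℕ) (hn1 : 1 ≤ n) (hn : (n : ℝ) ≤ Real.exp (3 * x))
    (zs : ℕ → ℂ) (hzs : ∀ j : ℕ, j < n → g1 (zs (j + 1)) = zs j)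
    (hder : ∀ j k : ℕ, j + k ≤ n →
      Real.exp (-Real.exp (x + 1)) < ‖Df g1 j (g1^[k] (zs n))‖) :
    ∃ y : ℂ, g2^[n] y = g1^[n] (zs n) ∧
      (∀ j : ℕ, j ≤ n →
        ‖g2^[j] y - g1^[j] (zs n)‖ < β * Real.exp (Real.exp (x + 2))) ∧
      ‖Complex.log (Df g2 n y / Df g1 n (zs n))‖ <
        Real.exp (-Real.exp x) := by
  classical
  -- abbreviations (opaque, to avoid definitional unfolding)
  obtain ⟨c, hc0⟩ : ∃ t : ℂ, Complex.log (lam1 / lam2) = t := ⟨_, rfl⟩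
  rw [hc0] at hβ
  obtain ⟨w, hw0⟩ : ∃ W : ℕ → ℂ, (fun j : ℕ => g1^[j] (zs n)) = W := ⟨_, rfl⟩
  have hwdef : ∀ j, w j = g1^[j] (zs n) := fun j => by rw [← hw0]
  obtain ⟨E1, hE1def⟩ : ∃ t : ℝ, Real.exp (x + 1) = t := ⟨_, rfl⟩
  rw [hE1def] at hder hβx
  obtain ⟨δ, hδdef⟩ : ∃ t : ℝ, Real.exp (-E1) = t := ⟨_, rfl⟩
  rw [hδdef] at hder
  obtain ⟨A, hAdef⟩ : ∃ t : ℝ, Real.exp E1 = t := ⟨_, rfl⟩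
  have hE1pos : (0:ℝ) < E1 := by rw [← hE1def]; exact Real.exp_pos _
  have hApos : (0:ℝ) < A := by rw [← hAdef]; exact Real.exp_pos _
  have hδpos : (0:ℝ) < δ := by rw [← hδdef]; exact Real.exp_pos _
  have h2e : (2:ℝ) ≤ Real.exp 1 := by
    have := Real.add_one_le_exp 1; linarith
  -- the basic size estimate  3x+2 ≤ exp (x+1)
  have hE1 : 3*x + 2 ≤ E1 := by
    rw [← hE1def]
    have h1' := Real.add_one_le_exp ((x+1)/2)
    have h2' : Real.exp ((x+1)/2) * Real.exp ((x+1)/2) = Real.exp (x+1) := by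
      rw [← Real.exp_add]; ring_nf
    nlinarith [Real.exp_pos ((x+1)/2)]
  have hδA : δ⁻¹ = A := by rw [← hδdef, ← hAdef, Real.exp_neg, inv_inv]
  have hδhalf : δ ≤ 1/2 := by
    have hd1 : δ ≤ Real.exp (-1) := by
      rw [← hδdef]; exact Real.exp_le_exp.mpr (by linarith)
    rw [Real.exp_neg] at hd1
    have : (Real.exp 1)⁻¹ ≤ 2⁻¹ := by
      apply inv_anti₀ (by norm_num) h2e
    norm_num at this
    linarith
  obtain ⟨B, hBdef⟩ : ∃ t : ℝ, Real.exp 1 * ((n:ℝ) * A) = t := ⟨_, rfl⟩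
  have hnR : (1:ℝ) ≤ (n:ℝ) := by exact_mod_cast hn1
  have hBpos : (0:ℝ) < B := by
    rw [← hBdef]; positivity
  have hBle : B ≤ Real.exp (1 + 3*x + E1) := by
    rw [← hBdef, ← hAdef]
    calc Real.exp 1 * ((n:ℝ) * Real.exp E1)
        ≤ Real.exp 1 * (Real.exp (3*x) * Real.exp E1) := by gcongr
      _ = Real.exp (1 + 3*x + E1) := by rw [← Real.exp_add, ← Real.exp_add]; ring_nf
  have hN1 : β * B * A ≤ δ := by
    rw [← hAdef]
    calc β * B * Real.exp E1
        ≤ Real.exp (-5*E1) * Real.exp (1 + 3*x + E1) * Real.exp E1 := by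
          gcongr
      _ = Real.exp (-5*E1 + (1 + 3*x + E1) + E1) := by
          rw [← Real.exp_add, ← Real.exp_add]
      _ ≤ δ := by rw [← hδdef]; exact Real.exp_le_exp.mpr (by linarith)
  have hβBδδ : β * B ≤ δ * δ := by
    have h := mul_le_mul_of_nonneg_right hN1 (le_of_lt (inv_pos.mpr hApos))
    rw [mul_assoc, mul_inv_cancel₀ hApos.ne', mul_one] at h
    calc β * B ≤ δ * A⁻¹ := h
      _ = δ * δ := by rw [← hδA, inv_inv]
  -- lower bounds for |w j|, j ≥ 1
  have hwlow : ∀ j, 1 ≤ j → j ≤ n → δ < ‖w j‖ := by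
    intro j h1j hjn
    have h := hder 1 (j-1) (by omega)
    have hDf1 : Df g1 1 (g1^[j-1] (zs n)) = w j := by
      rw [hwdef]
      simp only [Df, Finset.prod_range_one]
      rw [← Function.iterate_add_apply]
      congr 1; omega
    rwa [hDf1] at h
  have hwne : ∀ j, 1 ≤ j → j ≤ n → w j ≠ 0 := by
    intro j h1j hjn hzero
    have := hwlow j h1j hjn
    rw [hzero] at this; simp at this; linarith
  have hrinv : ∀ j, 1 ≤ j → j ≤ n → (‖w j‖)⁻¹ ≤ A := by
    intro j h1j hjn
    have h := hwlow j h1j hjn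
    calc (‖w j‖)⁻¹ ≤ δ⁻¹ := inv_anti₀ hδpos h.le
      _ = A := hδA
  have hg1w : ∀ i, i < n → g1 (w (n - (i+1))) = w (n - i) := by
    intro i hi
    rw [hwdef, hwdef, ← Function.iterate_succ_apply' g1 (n - (i+1)) (zs n)]
    congr 1; omega
  -- (1+δ)^i ≤ e for i ≤ n
  have hpow : ∀ i : ℕ, i ≤ n → (1 + δ)^i ≤ Real.exp 1 := by
    intro i hi
    have h1' : (1 + δ : ℝ) ≤ Real.exp δ := by
      have := Real.add_one_le_exp δ; linarith
    calc (1+δ)^i ≤ (Real.exp δ)^i := pow_le_pow_left₀ (by positivity) h1' i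
      _ = Real.exp ((i:ℕ) * δ) := by rw [← Real.exp_nat_mul]
      _ ≤ Real.exp 1 := by
          apply Real.exp_le_exp.mpr
          have hin : (i:ℝ) ≤ Real.exp (3*x) := le_trans (by exact_mod_cast hi) hn
          have : (i:ℝ) * δ ≤ Real.exp (3*x) * δ := by gcongr
          have h3 : Real.exp (3*x) * δ ≤ 1 := by
            rw [← hδdef, ← Real.exp_add]
            calc Real.exp (3*x + -E1) ≤ Real.exp 0 := Real.exp_le_exp.mpr (by linarith)
              _ = 1 := Real.exp_zero
          linarith
  -- sums of inverse derivatives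
  have hsumA : ∀ i j : ℕ, i + j ≤ n →
      ∑ m ∈ Finset.range i, (‖Df g1 m (w j)‖)⁻¹ ≤ (i:ℝ) * A := by
    intro i j hij
    have h := Finset.sum_le_card_nsmul (Finset.range i)
      (fun m => (‖Df g1 m (w j)‖)⁻¹) A ?_
    · simpa [Finset.card_range, nsmul_eq_mul] using h
    · intro m hm
      have hmi : m < i := Finset.mem_range.mp hm
      have hder' := hder m j (by omega)
      rw [hwdef]
      calc (‖Df g1 m (g1^[j] (zs n))‖)⁻¹ ≤ δ⁻¹ := by
            apply inv_anti₀ hδpos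
            exact hder'.le
        _ = A := hδA
  -- MAIN INDUCTIVE ESTIMATE
  have key : ∀ i : ℕ, i ≤ n →
      ‖U c w n i - w (n - i)‖ ≤
        β * (1+δ)^i * ∑ m ∈ Finset.range i, (‖Df g1 m (w (n - i))‖)⁻¹ := by
    intro i
    induction i with
    | zero => intro _; simp [U_zero]
    | succ i IH =>
      intro hi1
      have hin : i < n := hi1
      have hIH := IH hin.le
      have hn_i1 : 1 ≤ n - i := by omega
      have hn_i_le : n - i ≤ n := by omega
      have hrδ : δ < ‖w (n - i)‖ := hwlow _ hn_i1 hn_i_le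
      have hrpos : (0:ℝ) < ‖w (n - i)‖ := hδpos.trans hrδ
      have hwne' : w (n - i) ≠ 0 := hwne _ hn_i1 hn_i_le
      have hSnonneg : (0:ℝ) ≤ ∑ m ∈ Finset.range i, (‖Df g1 m (w (n - i))‖)⁻¹ :=
        Finset.sum_nonneg fun m _ => inv_nonneg.mpr (norm_nonneg _)
      -- ε_i ≤ β * B
      have hεB : ‖U c w n i - w (n - i)‖ ≤ β * B := by
        refine hIH.trans ?_
        have t1 : β * (1+δ)^i ≤ β * Real.exp 1 :=
          mul_le_mul_of_nonneg_left (hpow i hin.le) hβ0.le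
        have t2 : (∑ m ∈ Finset.range i, (‖Df g1 m (w (n - i))‖)⁻¹)
            ≤ (n:ℝ) * A := by
          refine (hsumA i (n - i) (by omega)).trans ?_
          exact mul_le_mul_of_nonneg_right (by exact_mod_cast hin.le) hApos.le
        calc β * (1+δ)^i * (∑ m ∈ Finset.range i, (‖Df g1 m (w (n - i))‖)⁻¹)
            ≤ β * Real.exp 1 * ((n:ℝ) * A) :=
              mul_le_mul t1 t2 hSnonneg
                (mul_nonneg hβ0.le (Real.exp_pos 1).le)
          _ = β * B := by rw [← hBdef]; ring
      have hεδr : ‖U c w n i - w (n - i)‖ < δ * ‖w (n - i)‖ := by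
        calc ‖U c w n i - w (n - i)‖ ≤ β * B := hεB
          _ ≤ δ * δ := hβBδδ
          _ < δ * ‖w (n - i)‖ := by gcongr
      have hune' : U c w n i ≠ 0 := by
        intro hzero
        rw [hzero, zero_sub, norm_neg] at hεδr
        nlinarith
      set v : ℂ := (U c w n i - w (n - i)) / w (n - i) with hvdef
      have hvabs : ‖v‖ = ‖U c w n i - w (n - i)‖ / ‖w (n - i)‖ := by
        rw [hvdef, norm_div]
      have hvδ : ‖v‖ ≤ δ := by
        rw [hvabs, div_le_iff₀ hrpos]
        linarith [hεδr, mul_comm δ (‖w (n - i)‖)]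
      have hquot : U c w n i / w (n - i) = 1 + v := by
        rw [hvdef]; field_simp; ring
      have hdiff : U c w n (i+1) - w (n - (i+1)) = c + Complex.log (1 + v) := by
        rw [U_succ, hquot]; ring
      have hlog : ‖Complex.log (1 + v)‖ ≤ (1+δ) * ‖v‖ :=
        aux_log_bound hδhalf hvδ
      have hstep : ‖U c w n (i+1) - w (n - (i+1))‖ ≤
          β + (1+δ) * (‖U c w n i - w (n - i)‖ / ‖w (n - i)‖) := by
        rw [hdiff]
        refine (norm_add_le _ _).trans ?_
        rw [← hβ]
        rw [hvabs] at hlog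
        linarith
      have hterm : ∀ m : ℕ,
          (‖Df g1 m (w (n - i))‖)⁻¹ / ‖w (n - i)‖ =
          (‖Df g1 (m+1) (w (n - (i+1)))‖)⁻¹ := by
        intro m
        rw [Df_succ', norm_mul, hg1w i hin, mul_inv, div_eq_mul_inv, mul_comm]
      calc ‖U c w n (i+1) - w (n - (i+1))‖
          ≤ β + (1+δ) * (‖U c w n i - w (n - i)‖ / ‖w (n - i)‖) := hstep
        _ ≤ β + (1+δ) * ((β * (1+δ)^i * ∑ m ∈ Finset.range i,
              (‖Df g1 m (w (n - i))‖)⁻¹) / ‖w (n - i)‖) := by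
            gcongr
        _ = β + β * (1+δ)^(i+1) * ∑ m ∈ Finset.range i,
              ((‖Df g1 m (w (n - i))‖)⁻¹ / ‖w (n - i)‖) := by
            rw [← Finset.sum_div]; ring
        _ = β + β * (1+δ)^(i+1) * ∑ m ∈ Finset.range i,
              (‖Df g1 (m+1) (w (n - (i+1)))‖)⁻¹ := by
            rw [Finset.sum_congr rfl fun m _ => hterm m]
        _ ≤ β * (1+δ)^(i+1) * ∑ m ∈ Finset.range (i+1),
              (‖Df g1 m (w (n - (i+1)))‖)⁻¹ := by
            rw [Finset.sum_range_succ']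
            have hf0 : (‖Df g1 0 (w (n - (i+1)))‖)⁻¹ = 1 := by
              rw [Df_zero]; simp
            rw [hf0]
            have hS : (0:ℝ) ≤ ∑ m ∈ Finset.range i,
                (‖Df g1 (m+1) (w (n - (i+1)))‖)⁻¹ :=
              Finset.sum_nonneg fun m _ => inv_nonneg.mpr (norm_nonneg _)
            have hP : (1:ℝ) ≤ (1+δ)^(i+1) := one_le_pow₀ (by linarith)
            nlinarith [mul_le_mul_of_nonneg_left hP hβ0.le]
  -- uniform bound on the orbit errors
  have hkeyB : ∀ i : ℕ, i ≤ n → ‖U c w n i - w (n - i)‖ ≤ β * B := by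
    intro i hi
    refine (key i hi).trans ?_
    have hSnonneg : (0:ℝ) ≤ ∑ m ∈ Finset.range i, (‖Df g1 m (w (n - i))‖)⁻¹ :=
      Finset.sum_nonneg fun m _ => inv_nonneg.mpr (norm_nonneg _)
    have t1 : β * (1+δ)^i ≤ β * Real.exp 1 :=
      mul_le_mul_of_nonneg_left (hpow i hi) hβ0.le
    have t2 : (∑ m ∈ Finset.range i, (‖Df g1 m (w (n - i))‖)⁻¹)
        ≤ (n:ℝ) * A := by
      refine (hsumA i (n - i) (by omega)).trans ?_
      exact mul_le_mul_of_nonneg_right (by exact_mod_cast hi) hApos.le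
    calc β * (1+δ)^i * (∑ m ∈ Finset.range i, (‖Df g1 m (w (n - i))‖)⁻¹)
        ≤ β * Real.exp 1 * ((n:ℝ) * A) :=
          mul_le_mul t1 t2 hSnonneg (mul_nonneg hβ0.le (Real.exp_pos 1).le)
      _ = β * B := by rw [← hBdef]; ring
  -- non-vanishing along the shadow orbit
  have hune : ∀ i : ℕ, i < n → U c w n i ≠ 0 := by
    intro i hi hzero
    have hε := hkeyB i hi.le
    rw [hzero, zero_sub, norm_neg] at hε
    have hrδ : δ < ‖w (n - i)‖ := hwlow _ (by omega) (by omega)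
    nlinarith
  -- the shadow orbit is a genuine g2-orbit
  have hg2u : ∀ i : ℕ, i < n → g2 (U c w n (i+1)) = U c w n i := by
    intro i hi
    have hwne' : w (n - i) ≠ 0 := hwne _ (by omega) (by omega)
    have hq : U c w n i / w (n - i) ≠ 0 := div_ne_zero (hune i hi) hwne'
    have hexpc : Complex.exp c = lam1 / lam2 := by
      rw [← hc0]; exact Complex.exp_log (div_ne_zero h1 h2)
    have hl1 : lam1 * Complex.exp (w (n - (i+1))) = w (n - i) := by
      rw [← hg1 (w (n - (i+1)))]; exact hg1w i hi
    rw [U_succ, hg2]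
    calc lam2 * Complex.exp (w (n - (i+1)) + c + Complex.log (U c w n i / w (n - i)))
        = lam2 * (Complex.exp (w (n - (i+1))) * Complex.exp c *
            Complex.exp (Complex.log (U c w n i / w (n - i)))) := by
          rw [Complex.exp_add, Complex.exp_add]
      _ = lam2 * (Complex.exp (w (n - (i+1))) * (lam1 / lam2) * (U c w n i / w (n - i))) := by
          rw [hexpc, Complex.exp_log hq]
      _ = (lam1 * Complex.exp (w (n - (i+1)))) * (U c w n i / w (n - i)) := by
          field_simp
      _ = w (n - i) * (U c w n i / w (n - i)) := by rw [hl1]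
      _ = U c w n i := by rw [mul_comm, div_mul_cancel₀ _ hwne']
  have horb : ∀ j : ℕ, j ≤ n → g2^[j] (U c w n n) = U c w n (n - j) := by
    intro j
    induction j with
    | zero => intro _; simp
    | succ j IH =>
      intro hj
      rw [Function.iterate_succ_apply', IH (by omega)]
      have h : n - j = (n - (j+1)) + 1 := by omega
      rw [h, hg2u (n - (j+1)) (by omega)]
  -- conclusion
  refine ⟨U c w n n, ?_, ?_, ?_⟩
  · rw [horb n le_rfl, Nat.sub_self, U_zero]
    exact hwdef n
  · -- the orbits stay close
    intro j hj
    rw [horb j hj, ← hwdef j]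
    have hε := hkeyB (n - j) (by omega)
    rw [show n - (n - j) = j by omega] at hε
    refine lt_of_le_of_lt hε ?_
    have hB2 : B < Real.exp (Real.exp (x + 2)) := by
      refine lt_of_le_of_lt hBle ?_
      apply Real.exp_lt_exp.mpr
      have hx2 : Real.exp (x + 2) = E1 * Real.exp 1 := by
        rw [show x + 2 = (x+1) + 1 by ring, Real.exp_add, hE1def]
      rw [hx2]
      nlinarith [mul_le_mul_of_nonneg_left h2e hE1pos.le]
    exact mul_lt_mul_of_pos_left hB2 hβ0
  · -- derivative comparison
    have hDf2 : Df g2 n (U c w n n) = ∏ j ∈ Finset.range n, U c w n (n - (j+1)) := by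
      simp only [Df]
      exact Finset.prod_congr rfl fun j hj => horb (j+1) (Finset.mem_range.mp hj)
    have hDf1 : Df g1 n (zs n) = ∏ j ∈ Finset.range n, w (j+1) := by
      simp only [Df]
      exact Finset.prod_congr rfl fun j _ => (hwdef (j+1)).symm
    have hL : ∀ j ∈ Finset.range n,
        U c w n (n - (j+1)) / w (j+1) =
          Complex.exp (Complex.log (U c w n (n - (j+1)) / w (j+1))) := by
      intro j hj
      have hjn : j < n := Finset.mem_range.mp hj
      exact (Complex.exp_log (div_ne_zero (hune _ (by omega))
        (hwne (j+1) (by omega) (by omega)))).symm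
    have hratio : Df g2 n (U c w n n) / Df g1 n (zs n) =
        Complex.exp (∑ j ∈ Finset.range n,
          Complex.log (U c w n (n - (j+1)) / w (j+1))) := by
      rw [hDf2, hDf1, ← Finset.prod_div_distrib, Finset.prod_congr rfl hL,
        Complex.exp_sum]
    rw [hratio]
    -- bound each log term
    have hLbound : ∀ j ∈ Finset.range n,
        ‖Complex.log (U c w n (n - (j+1)) / w (j+1))‖ ≤ 2 * (β * B * A) := by
      intro j hj
      have hjn : j < n := Finset.mem_range.mp hj
      have hwne' : w (j+1) ≠ 0 := hwne (j+1) (by omega) (by omega)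
      have hrpos : (0:ℝ) < ‖w (j+1)‖ :=
        hδpos.trans (hwlow (j+1) (by omega) (by omega))
      have hε := hkeyB (n - (j+1)) (by omega)
      rw [show n - (n - (j+1)) = j+1 by omega] at hε
      have hq : U c w n (n - (j+1)) / w (j+1) =
          1 + (U c w n (n - (j+1)) - w (j+1)) / w (j+1) := by
        field_simp; ring
      have habsv : ‖(U c w n (n - (j+1)) - w (j+1)) / w (j+1)‖ ≤ β * B * A := by
        rw [norm_div]
        calc ‖U c w n (n - (j+1)) - w (j+1)‖ / ‖w (j+1)‖
            ≤ (β * B) * (‖w (j+1)‖)⁻¹ := by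
              rw [div_eq_mul_inv]
              exact mul_le_mul_of_nonneg_right hε (inv_nonneg.mpr hrpos.le)
          _ ≤ (β * B) * A := by
              refine mul_le_mul_of_nonneg_left (hrinv (j+1) (by omega) (by omega)) ?_
              positivity
      have hvδ : ‖(U c w n (n - (j+1)) - w (j+1)) / w (j+1)‖ ≤ δ :=
        habsv.trans hN1
      rw [hq]
      refine (aux_log_bound hδhalf hvδ).trans ?_
      nlinarith [norm_nonneg ((U c w n (n - (j+1)) - w (j+1)) / w (j+1))]
    have hsumL : ‖∑ j ∈ Finset.range n,
        Complex.log (U c w n (n - (j+1)) / w (j+1))‖ ≤ (n:ℝ) * (2 * (β * B * A)) := by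
      refine (norm_sum_le _ _).trans ?_
      have h := Finset.sum_le_card_nsmul (Finset.range n)
        (fun j => ‖Complex.log (U c w n (n - (j+1)) / w (j+1))‖)
        (2 * (β * B * A)) hLbound
      simpa [Finset.card_range, nsmul_eq_mul] using h
    have hfin : (n:ℝ) * (2 * (β * B * A)) < Real.exp (-Real.exp x) := by
      have hEE : E1 = Real.exp x * Real.exp 1 := by rw [← hE1def, Real.exp_add]
      calc (n:ℝ) * (2 * (β * B * A))
          ≤ Real.exp (3*x) * (Real.exp 1 * (Real.exp (-5*E1) *
              Real.exp (1 + 3*x + E1) * Real.exp E1)) := by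
            rw [← hAdef]
            gcongr
        _ < Real.exp (-Real.exp x) := by
            simp only [← Real.exp_add]
            apply Real.exp_lt_exp.mpr
            nlinarith [mul_le_mul_of_nonneg_left h2e (Real.exp_pos x).le, Real.exp_pos x]
    have hsmall : ‖∑ j ∈ Finset.range n,
        Complex.log (U c w n (n - (j+1)) / w (j+1))‖ < Real.exp (-Real.exp x) :=
      lt_of_le_of_lt hsumL hfin
    have hle1 : ‖∑ j ∈ Finset.range n,
        Complex.log (U c w n (n - (j+1)) / w (j+1))‖ ≤ 1 := by
      refine hsmall.le.trans ?_
      exact Real.exp_le_one_iff.mpr (neg_nonpos.mpr (Real.exp_pos x).le)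
    rw [Complex.log_exp ?_ ?_]
    · exact hsmall
    · have := Complex.abs_im_le_norm (∑ j ∈ Finset.range n,
        Complex.log (U c w n (n - (j+1)) / w (j+1)))
      have hpi := Real.pi_gt_three
      rw [abs_le] at this
      linarith
    · have := Complex.abs_im_le_norm (∑ j ∈ Finset.range n,
        Complex.log (U c w n (n - (j+1)) / w (j+1)))
      have hpi := Real.pi_gt_three
      rw [abs_le] at this
      linarith
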